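/- arXiv:2204.06737 — 2 statements merged into one kernel-verified Lean document; each statement's English description precedes it below -/
import Mathlib

section
/- If S ⊆ W₁ × W₂ is a simulation between A-paraconsistent Kripke models M₁ and M₂ and (w₁,w₂) ∈ S, then for every formula φ in the positive fragment (built from ⊥, propositions, ∧, ∨, and ◇), (w₁ ⊨ φ) ≼ (w₂ ⊨ φ) in the order (a,b) ≼ (c,d) iff a ≤ c and d ≤ b. -/
open scoped Classical

/-- A paraconsistent Kripke model over a complete lattice `A`,
with states `W` and propositions `P`: a transition relation `R`, positive and
negative weight functions `Rp`, `Rm` (equal to 0 on non-transitions),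
and a valuation `V`. -/
structure PModel (A W P : Type*) [CompleteLattice A] where
  R : W → W → Prop
  Rp : W → W → A
  Rm : W → W → A
  V : P → W → A × A
  Rp_zero : ∀ w w', ¬ R w w' → Rp w w' = ⊥
  Rm_zero : ∀ w w', ¬ R w w' → Rm w w' = ⊥

/-- Formulas of the paraconsistent modal logic. -/
inductive Fm (P : Type*) where
  | bot : Fm P
  | prop : P → Fm P
  | neg : Fm P → Fm P
  | and : Fm P → Fm P → Fm P
  | or : Fm P → Fm P → Fm P
  | imp : Fm P → Fm P → Fm P
  | box : Fm P → Fm P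
  | dia : Fm P → Fm P
  | nbox : Fm P → Fm P
  | ndia : Fm P → Fm P
  | circ : Fm P → Fm P

/-- The product metric induced on `A × A` by a metric `d` on `A`. -/
noncomputable def Dtwist {A : Type*} (d : A → A → ℝ) (x y : A × A) : ℝ :=
  Real.sqrt (d x.1 y.1 ^ 2 + d x.2 y.2 ^ 2)

variable {A W P : Type*}

/-- The satisfaction relation: a pair of truth values in `A × A` for each
state and formula, given a residuum `r` and a metric `d` on `A`. -/
noncomputable def sat [CompleteLattice A] (r : A → A → A) (d : A → A → ℝ)
    (M : PModel A W P) : W → Fm P → A × A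
  | w, .bot => (⊥, ⊤)
  | w, .prop p => M.V p w
  | w, .neg φ => Prod.swap (sat r d M w φ)
  | w, .and φ ψ =>
      ((sat r d M w φ).1 ⊓ (sat r d M w ψ).1, (sat r d M w φ).2 ⊔ (sat r d M w ψ).2)
  | w, .or φ ψ =>
      ((sat r d M w φ).1 ⊔ (sat r d M w ψ).1, (sat r d M w φ).2 ⊓ (sat r d M w ψ).2)
  | w, .imp φ ψ =>
      (r (sat r d M w φ).1 (sat r d M w ψ).1, (sat r d M w φ).1 ⊓ (sat r d M w ψ).2)
  | w, .box φ =>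
      (⨅ w', ⨅ _ : M.R w w', r (M.Rp w w') (sat r d M w' φ).1,
       ⨆ w', ⨆ _ : M.R w w', M.Rp w w' ⊓ (sat r d M w' φ).2)
  | w, .dia φ =>
      (⨆ w', ⨆ _ : M.R w w', M.Rp w w' ⊓ (sat r d M w' φ).1,
       ⨅ w', ⨅ _ : M.R w w', r (M.Rp w w') (sat r d M w' φ).2)
  | w, .nbox φ =>
      (⨆ w', ⨆ _ : M.R w w', M.Rm w w' ⊓ (sat r d M w' φ).2,
       ⨅ w', ⨅ _ : M.R w w', r (M.Rm w w') (sat r d M w' φ).1)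
  | w, .ndia φ =>
      (⨅ w', ⨅ _ : M.R w w', r (M.Rm w w') (sat r d M w' φ).2,
       ⨆ w', ⨆ _ : M.R w w', M.Rm w w' ⊓ (sat r d M w' φ).1)
  | w, .circ φ =>
      if Dtwist d (sat r d M w φ) (⊥, ⊥) ≤ Dtwist d (sat r d M w φ) (⊤, ⊤)
      then (⊤, ⊥) else (⊥, ⊤)

/-- The positive fragment: formulas built from ⊥, propositions, ∧, ∨ and ◇. -/
inductive IsPos {P : Type*} : Fm P → Prop
  | bot : IsPos .bot
  | prop (p : P) : IsPos (.prop p)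
  | and {φ ψ} : IsPos φ → IsPos ψ → IsPos (.and φ ψ)
  | or {φ ψ} : IsPos φ → IsPos ψ → IsPos (.or φ ψ)
  | dia {φ} : IsPos φ → IsPos (.dia φ)

/-- Simulations preserve positive formulas: if S is a simulation between
A-paraconsistent Kripke models and (w₁,w₂) ∈ S, then for every positive
formula φ, (w₁ ⊨ φ) ≼ (w₂ ⊨ φ). -/
theorem simulation_preserves_positive {W₁ W₂ : Type*} [CompleteLattice A]
    [Fintype W₁] [Fintype W₂]
    (r : A → A → A) (d : A → A → ℝ)
    (adj : ∀ a b c : A, a ⊓ b ≤ c ↔ b ≤ r a c)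
    (prelin : ∀ a b : A, r a b ⊔ r b a = ⊤)
    (M₁ : PModel A W₁ P) (M₂ : PModel A W₂ P)
    (S : W₁ → W₂ → Prop)
    (hsim : ∀ w₁ w₂, S w₁ w₂ → ∀ w₁', M₁.R w₁ w₁' →
      ∃ w₂', M₂.R w₂ w₂' ∧ S w₁' w₂' ∧
        M₁.Rp w₁ w₁' ≤ M₂.Rp w₂ w₂' ∧ M₂.Rm w₂ w₂' ≤ M₁.Rm w₁ w₁')
    (hV : ∀ (p : P) w₁ w₂, S w₁ w₂ →
      (M₁.V p w₁).1 ≤ (M₂.V p w₂).1 ∧ (M₂.V p w₂).2 ≤ (M₁.V p w₁).2)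
    (φ : Fm P) (hφ : IsPos φ) (w₁ : W₁) (w₂ : W₂) (hS : S w₁ w₂) :
    (sat r d M₁ w₁ φ).1 ≤ (sat r d M₂ w₂ φ).1 ∧
      (sat r d M₂ w₂ φ).2 ≤ (sat r d M₁ w₁ φ).2 := by
  have rmono : ∀ a a' c c' : A, a' ≤ a → c ≤ c' → r a c ≤ r a' c' := by
    intro a a' c c' ha hc
    rw [← adj]
    calc a' ⊓ r a c ≤ a ⊓ r a c := inf_le_inf_right _ ha
      _ ≤ c := (adj a (r a c) c).mpr le_rfl
      _ ≤ c' := hc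
  induction hφ generalizing w₁ w₂ with
  | bot => exact ⟨le_rfl, le_rfl⟩
  | prop p => exact hV p w₁ w₂ hS
  | and hφ hψ ihφ ihψ =>
    obtain ⟨h1, h2⟩ := ihφ w₁ w₂ hS; obtain ⟨h3, h4⟩ := ihψ w₁ w₂ hS
    exact ⟨inf_le_inf h1 h3, sup_le_sup h2 h4⟩
  | or hφ hψ ihφ ihψ =>
    obtain ⟨h1, h2⟩ := ihφ w₁ w₂ hS; obtain ⟨h3, h4⟩ := ihψ w₁ w₂ hS
    exact ⟨sup_le_sup h1 h3, inf_le_inf h2 h4⟩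
  | dia hφ ih =>
    constructor
    · simp only [sat, iSup_le_iff]
      intro w₁' hR
      obtain ⟨w₂', hR₂, hS', hp, hm⟩ := hsim w₁ w₂ hS w₁' hR
      calc M₁.Rp w₁ w₁' ⊓ (sat r d M₁ w₁' _).1
          ≤ M₂.Rp w₂ w₂' ⊓ (sat r d M₂ w₂' _).1 :=
            inf_le_inf hp (ih w₁' w₂' hS').1
        _ ≤ _ := le_iSup₂_of_le w₂' hR₂ le_rfl
    · simp only [sat, le_iInf_iff]
      intro w₁' hR
      obtain ⟨w₂', hR₂, hS', hp, hm⟩ := hsim w₁ w₂ hS w₁' hR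
      calc (⨅ w', ⨅ _ : M₂.R w₂ w', r (M₂.Rp w₂ w') (sat r d M₂ w' _).2)
          ≤ r (M₂.Rp w₂ w₂') (sat r d M₂ w₂' _).2 :=
            iInf₂_le_of_le w₂' hR₂ le_rfl
        _ ≤ r (M₁.Rp w₁ w₁') (sat r d M₁ w₁' _).2 :=
            rmono _ _ _ _ hp (ih w₁' w₂' hS').2
end

section
/- If B ⊆ W₁ × W₂ is a bisimulation between A-paraconsistent Kripke models M₁ and M₂ (matching transitions with identical weight pairs and equal valuations on related states), then for every formula φ of the full language (with ⊥, propositions, ¬, ∧, ∨, →, □, ◇, ∖□, ∖◇, ∘) and every (w,v) ∈ B, (w ⊨ φ) = (v ⊨ φ). -/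
open scoped Classical

variable {A W P : Type*}

theorem biSup_congr_rel {A α β : Type*} [CompleteLattice A]
    (R1 : α → Prop) (R2 : β → Prop) (f : α → A) (g : β → A)
    (h1 : ∀ a, R1 a → ∃ b, R2 b ∧ f a = g b)
    (h2 : ∀ b, R2 b → ∃ a, R1 a ∧ f a = g b) :
    (⨆ a, ⨆ _ : R1 a, f a) = ⨆ b, ⨆ _ : R2 b, g b := by
  apply le_antisymm
  · refine iSup₂_le fun a ha => ?_
    obtain ⟨b, hb, he⟩ := h1 a ha
    exact he ▸ le_iSup₂ (f := fun b (_ : R2 b) => g b) b hb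
  · refine iSup₂_le fun b hb => ?_
    obtain ⟨a, ha, he⟩ := h2 b hb
    exact he ▸ le_iSup₂ (f := fun a (_ : R1 a) => f a) a ha

theorem biInf_congr_rel {A α β : Type*} [CompleteLattice A]
    (R1 : α → Prop) (R2 : β → Prop) (f : α → A) (g : β → A)
    (h1 : ∀ a, R1 a → ∃ b, R2 b ∧ f a = g b)
    (h2 : ∀ b, R2 b → ∃ a, R1 a ∧ f a = g b) :
    (⨅ a, ⨅ _ : R1 a, f a) = ⨅ b, ⨅ _ : R2 b, g b := by
  apply le_antisymm
  · refine le_iInf₂ fun b hb => ?_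
    obtain ⟨a, ha, he⟩ := h2 b hb
    exact he ▸ iInf₂_le (f := fun a (_ : R1 a) => f a) a ha
  · refine le_iInf₂ fun a ha => ?_
    obtain ⟨b, hb, he⟩ := h1 a ha
    exact he ▸ iInf₂_le (f := fun b (_ : R2 b) => g b) b hb

/-- Bisimulations preserve all formulas: if B is a bisimulation between
A-paraconsistent Kripke models, matching transitions with identical weight
pairs and with equal valuations on related states, then for every formula φ
of the full language and every (w,v) ∈ B, (w ⊨ φ) = (v ⊨ φ). -/
theorem bisimulation_invariance {W₁ W₂ : Type*} [CompleteLattice A]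
    [Fintype W₁] [Fintype W₂]
    (r : A → A → A) (d : A → A → ℝ)
    (adj : ∀ a b c : A, a ⊓ b ≤ c ↔ b ≤ r a c)
    (prelin : ∀ a b : A, r a b ⊔ r b a = ⊤)
    (hd₀ : ∀ a b : A, d a b = 0 ↔ a = b)
    (hdsymm : ∀ a b : A, d a b = d b a)
    (hdtri : ∀ a b c : A, d a b ≤ d a c + d c b)
    (M₁ : PModel A W₁ P) (M₂ : PModel A W₂ P)
    (B : W₁ → W₂ → Prop)
    (hforth : ∀ p q, B p q → ∀ p', M₁.R p p' →
      ∃ q', M₂.R q q' ∧ B p' q' ∧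
        M₁.Rp p p' = M₂.Rp q q' ∧ M₁.Rm p p' = M₂.Rm q q')
    (hback : ∀ p q, B p q → ∀ q', M₂.R q q' →
      ∃ p', M₁.R p p' ∧ B p' q' ∧
        M₁.Rp p p' = M₂.Rp q q' ∧ M₁.Rm p p' = M₂.Rm q q')
    (hV : ∀ (p : P) w₁ w₂, B w₁ w₂ → M₁.V p w₁ = M₂.V p w₂)
    (φ : Fm P) (w : W₁) (v : W₂) (hB : B w v) :
    sat r d M₁ w φ = sat r d M₂ v φ := by
  induction φ generalizing w v with
  | bot => rfl
  | prop p => exact hV p w v hB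
  | neg φ ih => simp only [sat, ih w v hB]
  | and φ ψ ihφ ihψ => simp only [sat, ihφ w v hB, ihψ w v hB]
  | or φ ψ ihφ ihψ => simp only [sat, ihφ w v hB, ihψ w v hB]
  | imp φ ψ ihφ ihψ => simp only [sat, ihφ w v hB, ihψ w v hB]
  | circ φ ih => simp only [sat, ih w v hB]
  | box φ ih =>
    simp only [sat]
    refine Prod.ext ?_ ?_
    · exact biInf_congr_rel _ _ _ _
        (fun p' hp' => by
          obtain ⟨q', hq', hB', hp, _⟩ := hforth w v hB p' hp'
          exact ⟨q', hq', by rw [hp, ih p' q' hB']⟩)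
        (fun q' hq' => by
          obtain ⟨p', hp', hB', hp, _⟩ := hback w v hB q' hq'
          exact ⟨p', hp', by rw [hp, ih p' q' hB']⟩)
    · exact biSup_congr_rel _ _ _ _
        (fun p' hp' => by
          obtain ⟨q', hq', hB', hp, _⟩ := hforth w v hB p' hp'
          exact ⟨q', hq', by rw [hp, ih p' q' hB']⟩)
        (fun q' hq' => by
          obtain ⟨p', hp', hB', hp, _⟩ := hback w v hB q' hq'
          exact ⟨p', hp', by rw [hp, ih p' q' hB']⟩)
  | dia φ ih =>
    simp only [sat]
    refine Prod.ext ?_ ?_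
    · exact biSup_congr_rel _ _ _ _
        (fun p' hp' => by
          obtain ⟨q', hq', hB', hp, _⟩ := hforth w v hB p' hp'
          exact ⟨q', hq', by rw [hp, ih p' q' hB']⟩)
        (fun q' hq' => by
          obtain ⟨p', hp', hB', hp, _⟩ := hback w v hB q' hq'
          exact ⟨p', hp', by rw [hp, ih p' q' hB']⟩)
    · exact biInf_congr_rel _ _ _ _
        (fun p' hp' => by
          obtain ⟨q', hq', hB', hp, _⟩ := hforth w v hB p' hp'
          exact ⟨q', hq', by rw [hp, ih p' q' hB']⟩)
        (fun q' hq' => by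
          obtain ⟨p', hp', hB', hp, _⟩ := hback w v hB q' hq'
          exact ⟨p', hp', by rw [hp, ih p' q' hB']⟩)
  | nbox φ ih =>
    simp only [sat]
    refine Prod.ext ?_ ?_
    · exact biSup_congr_rel _ _ _ _
        (fun p' hp' => by
          obtain ⟨q', hq', hB', _, hm⟩ := hforth w v hB p' hp'
          exact ⟨q', hq', by rw [hm, ih p' q' hB']⟩)
        (fun q' hq' => by
          obtain ⟨p', hp', hB', _, hm⟩ := hback w v hB q' hq'
          exact ⟨p', hp', by rw [hm, ih p' q' hB']⟩)
    · exact biInf_congr_rel _ _ _ _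
        (fun p' hp' => by
          obtain ⟨q', hq', hB', _, hm⟩ := hforth w v hB p' hp'
          exact ⟨q', hq', by rw [hm, ih p' q' hB']⟩)
        (fun q' hq' => by
          obtain ⟨p', hp', hB', _, hm⟩ := hback w v hB q' hq'
          exact ⟨p', hp', by rw [hm, ih p' q' hB']⟩)
  | ndia φ ih =>
    simp only [sat]
    refine Prod.ext ?_ ?_
    · exact biInf_congr_rel _ _ _ _
        (fun p' hp' => by
          obtain ⟨q', hq', hB', _, hm⟩ := hforth w v hB p' hp'
          exact ⟨q', hq', by rw [hm, ih p' q' hB']⟩)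
        (fun q' hq' => by
          obtain ⟨p', hp', hB', _, hm⟩ := hback w v hB q' hq'
          exact ⟨p', hp', by rw [hm, ih p' q' hB']⟩)
    · exact biSup_congr_rel _ _ _ _
        (fun p' hp' => by
          obtain ⟨q', hq', hB', _, hm⟩ := hforth w v hB p' hp'
          exact ⟨q', hq', by rw [hm, ih p' q' hB']⟩)
        (fun q' hq' => by
          obtain ⟨p', hp', hB', _, hm⟩ := hback w v hB q' hq'
          exact ⟨p', hp', by rw [hm, ih p' q' hB']⟩)
end
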